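/- Let n,m ≥ 1, let δ ∈ [0,1], and let μ be a probability distribution on matrices A ∈ F_2^{n×m} such that for every nonzero z ∈ F_2^m, Pr_{A∼μ}[Az = 0] ≤ δ. Let M ∈ F_2^{m×m} be a symmetric matrix with rank(M) = l over F_2. Then Pr_{A∼μ}[rank(A M Aᵀ) ≠ l] ≤ (2^l − 1)δ. -/

import Mathlib

open scoped BigOperators Classical

noncomputable section

open Module

lemma aux_rank {n m : ℕ} (A : Matrix (Fin n) (Fin m) (ZMod 2))
    (M : Matrix (Fin m) (Fin m) (ZMod 2)) (hsymm : M.IsSymm)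
    (h : ∀ x, x ∈ LinearMap.range M.mulVecLin → A.mulVec x = 0 → x = 0) :
    (A * M * A.transpose).rank = M.rank := by
  -- Step 1 : ker (A*M*Aᵀ) = ker (M*Aᵀ)
  have hker : LinearMap.ker (A * M * A.transpose).mulVecLin
      = LinearMap.ker (M * A.transpose).mulVecLin := by
    ext v
    simp only [LinearMap.mem_ker, Matrix.mulVecLin_apply]
    constructor
    · intro hv
      have h1 : A.mulVec ((M * A.transpose).mulVec v) = 0 := by
        rw [Matrix.mulVec_mulVec, ← Matrix.mul_assoc]
        exact hv
      have h2 : (M * A.transpose).mulVec v ∈ LinearMap.range M.mulVecLin := by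
        rw [← Matrix.mulVec_mulVec]
        exact ⟨A.transpose.mulVec v, rfl⟩
      exact h _ h2 h1
    · intro hv
      have : (A * M * A.transpose).mulVec v = A.mulVec ((M * A.transpose).mulVec v) := by
        rw [Matrix.mulVec_mulVec, Matrix.mul_assoc]
      rw [this, hv, Matrix.mulVec_zero]
  -- Step 2 : rank (A*M*Aᵀ) = rank (M*Aᵀ) by rank-nullity
  have hstep2 : (A * M * A.transpose).rank = (M * A.transpose).rank := by
    have e1 := LinearMap.finrank_range_add_finrank_ker (A * M * A.transpose).mulVecLin
    have e2 := LinearMap.finrank_range_add_finrank_ker (M * A.transpose).mulVecLin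
    rw [hker] at e1
    unfold Matrix.rank
    omega
  -- Step 3 : rank (M*Aᵀ) = rank (A*M) by transpose + symmetry
  have hstep3 : (M * A.transpose).rank = (A * M).rank := by
    rw [← Matrix.rank_transpose (M * A.transpose), Matrix.transpose_mul,
      Matrix.transpose_transpose, hsymm.eq]
  -- Step 4 : rank (A*M) = rank M since A injective on range of M
  have hstep4 : (A * M).rank = M.rank := by
    unfold Matrix.rank
    rw [Matrix.mulVecLin_mul, LinearMap.range_comp]
    set p := LinearMap.range M.mulVecLin
    let f := A.mulVecLin.comp p.subtype
    have hinj : Function.Injective f := by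
      rw [← LinearMap.ker_eq_bot, eq_bot_iff]
      rintro ⟨x, hx⟩ hz
      simp only [LinearMap.mem_ker, LinearMap.comp_apply, Submodule.subtype_apply,
        Matrix.mulVecLin_apply, f] at hz
      simp only [Submodule.mem_bot, Submodule.mk_eq_zero]
      exact h x hx hz
    have hr : LinearMap.range f = Submodule.map A.mulVecLin p := by
      rw [LinearMap.range_comp, Submodule.range_subtype]
    rw [← hr, LinearMap.finrank_range_of_inj hinj]
  rw [hstep2, hstep3, hstep4]

theorem rank_preservation (n m : ℕ) (hn : 0 < n) (hm : 0 < m) (δ : ℝ) (hδ0 : 0 ≤ δ) (hδ1 : δ ≤ 1)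
    (μ : Matrix (Fin n) (Fin m) (ZMod 2) → ℝ)
    (hμ0 : ∀ A, 0 ≤ μ A) (hμ1 : ∑ A : Matrix (Fin n) (Fin m) (ZMod 2), μ A = 1)
    (hsmooth : ∀ z : Fin m → ZMod 2, z ≠ 0 →
      (∑ A : Matrix (Fin n) (Fin m) (ZMod 2), if A.mulVec z = 0 then μ A else 0) ≤ δ)
    (l : ℕ) (M : Matrix (Fin m) (Fin m) (ZMod 2)) (hsymm : M.IsSymm) (hrank : M.rank = l) :
    (∑ A : Matrix (Fin n) (Fin m) (ZMod 2),
        if (A * M * A.transpose).rank ≠ l then μ A else 0) ≤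
      ((2 : ℝ) ^ l - 1) * δ := by
  set V := LinearMap.range M.mulVecLin with hV
  -- the bad set of vectors
  set T : Finset (Fin m → ZMod 2) :=
    Finset.univ.filter (fun x => x ∈ V ∧ x ≠ 0) with hT
  -- cardinality of V
  have hfr : finrank (ZMod 2) V = l := by rw [← hrank]; rfl
  have hcardV : Fintype.card V = 2 ^ l := by
    rw [Module.card_fintype (finBasis (ZMod 2) V), ZMod.card, hfr, Fintype.card_fin]
  have hcardT : T.card = 2 ^ l - 1 := by
    have : T = (Finset.univ.filter (fun x : V => (x : Fin m → ZMod 2) ≠ 0)).image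
        (fun x : V => (x : Fin m → ZMod 2)) := by
      ext x
      simp only [hT, Finset.mem_filter, Finset.mem_univ, true_and, Finset.mem_image,
        Subtype.exists, exists_and_right, exists_eq_right]
      tauto
    rw [this, Finset.card_image_of_injective _ Subtype.coe_injective]
    have h0 : (Finset.univ.filter (fun x : V => (x : Fin m → ZMod 2) ≠ 0)) =
        Finset.univ \ {(0 : V)} := by
      ext x
      simp [Finset.mem_filter, Finset.mem_sdiff, Submodule.coe_eq_zero, sub_eq_zero]
    rw [h0, Finset.card_sdiff_of_subset (by simp), Finset.card_univ, hcardV, Finset.card_singleton]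
  -- pointwise bound
  have hpoint : ∀ A : Matrix (Fin n) (Fin m) (ZMod 2),
      (if (A * M * A.transpose).rank ≠ l then μ A else 0) ≤
        ∑ x ∈ T, (if A.mulVec x = 0 then μ A else 0) := by
    intro A
    by_cases hbad : (A * M * A.transpose).rank ≠ l
    · rw [if_pos hbad]
      have : ∃ x ∈ T, A.mulVec x = 0 := by
        by_contra hc
        push_neg at hc
        apply hbad
        rw [← hrank]
        apply aux_rank A M hsymm
        intro x hx hx0
        by_contra hxne
        exact hc x (Finset.mem_filter.mpr ⟨Finset.mem_univ x, hx, hxne⟩) hx0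
      obtain ⟨x, hxT, hx0⟩ := this
      calc μ A = (if A.mulVec x = 0 then μ A else 0) := by rw [if_pos hx0]
        _ ≤ ∑ y ∈ T, (if A.mulVec y = 0 then μ A else 0) := by
            apply Finset.single_le_sum (f := fun y => if A.mulVec y = 0 then μ A else 0)
              (fun y _ => by split_ifs with h; exacts [hμ0 A, le_rfl]) hxT
    · rw [if_neg hbad]
      exact Finset.sum_nonneg fun y _ => by split_ifs with h; exacts [hμ0 A, le_rfl]
  calc (∑ A : Matrix (Fin n) (Fin m) (ZMod 2),
        if (A * M * A.transpose).rank ≠ l then μ A else 0)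
      ≤ ∑ A : Matrix (Fin n) (Fin m) (ZMod 2), ∑ x ∈ T,
          (if A.mulVec x = 0 then μ A else 0) := Finset.sum_le_sum fun A _ => hpoint A
    _ = ∑ x ∈ T, ∑ A : Matrix (Fin n) (Fin m) (ZMod 2),
          (if A.mulVec x = 0 then μ A else 0) := Finset.sum_comm
    _ ≤ ∑ x ∈ T, δ := by
        apply Finset.sum_le_sum
        intro x hx
        have hx0 : x ≠ 0 := (Finset.mem_filter.mp hx).2.2
        exact hsmooth x hx0
    _ = T.card * δ := by rw [Finset.sum_const, nsmul_eq_mul]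
    _ = ((2 : ℝ) ^ l - 1) * δ := by
        rw [hcardT]
        congr 1
        have h1 : (1 : ℕ) ≤ 2 ^ l := Nat.one_le_two_pow
        push_cast [h1]
        ring
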